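/- Lemma 3.2(a): for every α ∈ (0,1), every partition 0 = t_0 < ⋯ < t_N = T, and all 1 ≤ j ≤ n ≤ N, the complementary discrete kernels satisfy 0 ≤ P^{n,j}_α ≤ Γ(2−α)·Δt_j^α. -/

import Mathlib

open Finset

/-- The kernel `k_β(s) = s^(β-1)/Γ(β)`. -/
noncomputable def kker (β s : ℝ) : ℝ := s ^ (β - 1) / Real.Gamma β

/-- The discrete L1 kernels `K^{n,j}_{1-α}`. -/
noncomputable def Kd (α : ℝ) (t : ℕ → ℝ) (n j : ℕ) : ℝ :=
  (kker (2 - α) (t n - t (j - 1)) - kker (2 - α) (t n - t j)) / (t j - t (j - 1))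

/-- The complementary discrete kernels `P^{n,i}_α`, defined by downward recursion. -/
noncomputable def Pd (α : ℝ) (t : ℕ → ℝ) (n i : ℕ) : ℝ :=
  if i = n then 1 / Kd α t n n
  else (1 / Kd α t i i) *
    ∑ j ∈ (Finset.Ioc i n).attach,
      Pd α t n j.1 * (Kd α t j.1 (i + 1) - Kd α t j.1 i)
termination_by n - i
decreasing_by
  have h := Finset.mem_Ioc.mp j.2
  omega

section AuxCKB

variable {α : ℝ} {N : ℕ} {t : ℕ → ℝ}

lemma ckb_t_lt (hmono : ∀ j, j < N → t j < t (j + 1)) :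
    ∀ i j : ℕ, i < j → j ≤ N → t i < t j := by
  intro i j hij hjN
  induction j with
  | zero => omega
  | succ k ih =>
    rcases Nat.lt_succ_iff_lt_or_eq.mp hij with h | h
    · exact (ih h (by omega)).trans (hmono k (by omega))
    · subst h; exact hmono i (by omega)

lemma ckb_t_le (hmono : ∀ j, j < N → t j < t (j + 1)) {i j : ℕ}
    (hij : i ≤ j) (hjN : j ≤ N) : t i ≤ t j := by
  rcases eq_or_lt_of_le hij with rfl | h
  · exact le_rfl
  · exact (ckb_t_lt hmono i j h hjN).le

lemma Kd_eq (α : ℝ) (t : ℕ → ℝ) (n j : ℕ) :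
    Kd α t n j = ((t n - t (j - 1)) ^ (1 - α) - (t n - t j) ^ (1 - α)) /
      (t j - t (j - 1)) / Real.Gamma (2 - α) := by
  unfold Kd kker
  have h : (2 : ℝ) - α - 1 = 1 - α := by ring
  rw [h]; ring

lemma Kd_pos (hα0 : 0 < α) (hα1 : α < 1) (hmono : ∀ j, j < N → t j < t (j + 1))
    {n j : ℕ} (hj : 1 ≤ j) (hjn : j ≤ n) (hnN : n ≤ N) : 0 < Kd α t n j := by
  rw [Kd_eq]
  have hΓ : 0 < Real.Gamma (2 - α) := Real.Gamma_pos_of_pos (by linarith)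
  have hΔ : 0 < t j - t (j - 1) :=
    sub_pos.2 (ckb_t_lt hmono (j - 1) j (by omega) (by omega))
  have hb : (0:ℝ) ≤ t n - t j := sub_nonneg.2 (ckb_t_le hmono hjn hnN)
  have hab : t n - t j < t n - t (j - 1) := by
    have := ckb_t_lt hmono (j - 1) j (by omega) (by omega)
    have := ckb_t_le hmono hjn hnN
    linarith [ckb_t_lt hmono (j-1) n (by omega) hnN]
  have hnum : (t n - t j) ^ (1 - α) < (t n - t (j - 1)) ^ (1 - α) :=
    Real.rpow_lt_rpow hb hab (by linarith)
  exact div_pos (div_pos (sub_pos.2 hnum) hΔ) hΓ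

lemma one_div_Kd_diag (hα0 : 0 < α) (hα1 : α < 1)
    (hmono : ∀ j, j < N → t j < t (j + 1)) {i : ℕ} (hi : 1 ≤ i) (hiN : i ≤ N) :
    1 / Kd α t i i = Real.Gamma (2 - α) * (t i - t (i - 1)) ^ α := by
  have hΓ : 0 < Real.Gamma (2 - α) := Real.Gamma_pos_of_pos (by linarith)
  have hΔ : 0 < t i - t (i - 1) :=
    sub_pos.2 (ckb_t_lt hmono (i - 1) i (by omega) hiN)
  rw [Kd_eq, sub_self, Real.zero_rpow (by linarith : (1:ℝ) - α ≠ 0), sub_zero]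
  have h1 : (t i - t (i - 1)) ^ α * (t i - t (i - 1)) ^ (1 - α) = t i - t (i - 1) := by
    rw [← Real.rpow_add hΔ]; norm_num
  have h2 : ((t i - t (i - 1)) ^ (1 - α)) ≠ 0 := (Real.rpow_pos_of_pos hΔ _).ne'
  field_simp
  linear_combination -h1

lemma Kd_anti (hα0 : 0 < α) (hα1 : α < 1) (hmono : ∀ j, j < N → t j < t (j + 1))
    {i j : ℕ} (hi : 1 ≤ i) (hij : i + 1 ≤ j) (hjN : j ≤ N) :
    Kd α t j i ≤ Kd α t j (i + 1) := by
  have hΓ : 0 < Real.Gamma (2 - α) := Real.Gamma_pos_of_pos (by linarith)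
  rw [Kd_eq, Kd_eq]
  have h0 : Nat.succ i - 1 = i := rfl
  set x := t j - t (i + 1) with hx
  set y := t j - t i with hy
  set z := t j - t (i - 1) with hz
  have hxmem : x ∈ Set.Ici (0:ℝ) := sub_nonneg.2 (ckb_t_le hmono hij hjN)
  have hzmem : z ∈ Set.Ici (0:ℝ) :=
    sub_nonneg.2 (ckb_t_le hmono (by omega) hjN)
  have hxy : x < y := by
    have := ckb_t_lt hmono i (i + 1) (by omega) (by omega)
    simp only [hx, hy]; linarith
  have hyz : y < z := by
    have := ckb_t_lt hmono (i - 1) i (by omega) (by omega)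
    simp only [hy, hz]; linarith
  have key := (Real.concaveOn_rpow (by linarith : (0:ℝ) ≤ 1 - α)
    (by linarith : (1:ℝ) - α ≤ 1)).slope_anti_adjacent hxmem hzmem hxy hyz
  have e1 : t (i + 1 - 1) = t i := by norm_num
  have e2 : t (i + 1) - t i = y - x := by simp only [hx, hy]; ring
  have e3 : t i - t (i - 1) = z - y := by simp only [hy, hz]; ring
  rw [e1, e2, e3]
  gcongr

lemma ckb_key (hα0 : 0 < α) (hα1 : α < 1) (hmono : ∀ j, j < N → t j < t (j + 1)) :
    ∀ m i n : ℕ, n - i = m → 1 ≤ i → i ≤ n → n ≤ N →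
      (∀ j ∈ Finset.Icc i n, 0 ≤ Pd α t n j) ∧
      ∑ j ∈ Finset.Icc i n, Pd α t n j * Kd α t j i = 1 := by
  intro m
  induction m with
  | zero =>
    intro i n hm hi hin hnN
    have hin' : i = n := by omega
    subst hin'
    have hK : 0 < Kd α t i i := Kd_pos hα0 hα1 hmono hi le_rfl hnN
    have hP : Pd α t i i = 1 / Kd α t i i := by rw [Pd]; simp
    constructor
    · intro j hj
      have : j = i := by simpa using hj
      subst this
      rw [hP]; positivity
    · rw [Finset.Icc_self, Finset.sum_singleton, hP, one_div, inv_mul_cancel₀ hK.ne']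
  | succ m ih =>
    intro i n hm hi hin hnN
    have hin' : i < n := by omega
    obtain ⟨ihnn, ihsum⟩ := ih (i + 1) n (by omega) (by omega) (by omega) hnN
    have hKii : 0 < Kd α t i i := Kd_pos hα0 hα1 hmono hi le_rfl (by omega)
    have hPd : Pd α t n i = (1 / Kd α t i i) *
        ∑ j ∈ Finset.Ioc i n, Pd α t n j * (Kd α t j (i + 1) - Kd α t j i) := by
      rw [Pd, if_neg (by omega)]
      congr 1
      exact Finset.sum_attach (Finset.Ioc i n) (fun j => Pd α t n j * (Kd α t j (i + 1) - Kd α t j i))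
    have hterm : ∀ j ∈ Finset.Ioc i n,
        0 ≤ Pd α t n j * (Kd α t j (i + 1) - Kd α t j i) := by
      intro j hj
      have hj' := Finset.mem_Ioc.mp hj
      refine mul_nonneg (ihnn j (Finset.mem_Icc.mpr ⟨by omega, hj'.2⟩)) ?_
      have := Kd_anti hα0 hα1 hmono hi (by omega : i + 1 ≤ j) (by omega)
      linarith
    have hPnni : 0 ≤ Pd α t n i := by
      rw [hPd]
      exact mul_nonneg (by positivity) (Finset.sum_nonneg hterm)
    constructor
    · intro j hj
      have hj' := Finset.mem_Icc.mp hj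
      rcases eq_or_lt_of_le hj'.1 with rfl | h
      · exact hPnni
      · exact ihnn j (Finset.mem_Icc.mpr ⟨by omega, hj'.2⟩)
    · rw [Finset.Icc_eq_cons_Ioc (by omega : i ≤ n), Finset.sum_cons]
      have hPK : Pd α t n i * Kd α t i i =
          ∑ j ∈ Finset.Ioc i n, Pd α t n j * (Kd α t j (i + 1) - Kd α t j i) := by
        rw [hPd, mul_comm, ← mul_assoc, mul_one_div, div_self hKii.ne', one_mul]
      rw [hPK, ← Finset.sum_add_distrib]
      have : ∀ j ∈ Finset.Ioc i n,
          Pd α t n j * (Kd α t j (i + 1) - Kd α t j i) + Pd α t n j * Kd α t j i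
            = Pd α t n j * Kd α t j (i + 1) := by
        intro j _; ring
      rw [Finset.sum_congr rfl this, ← Finset.Icc_add_one_left_eq_Ioc]
      exact ihsum

end AuxCKB

/-- Lemma 3.2(a): `0 ≤ P^{n,j}_α ≤ Γ(2-α) · Δt_j^α` for all `1 ≤ j ≤ n ≤ N`. -/
theorem complementary_kernel_bounds
    (α T : ℝ) (N : ℕ) (t : ℕ → ℝ)
    (hα0 : 0 < α) (hα1 : α < 1) (hT : 0 < T)
    (ht0 : t 0 = 0) (htN : t N = T)
    (hmono : ∀ j, j < N → t j < t (j + 1)) :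
    ∀ n j, 1 ≤ j → j ≤ n → n ≤ N →
      0 ≤ Pd α t n j ∧ Pd α t n j ≤ Real.Gamma (2 - α) * (t j - t (j - 1)) ^ α := by
  intro n j hj hjn hnN
  obtain ⟨hnn, hsum⟩ := ckb_key hα0 hα1 hmono (n - j) j n rfl hj hjn hnN
  have hKjj : 0 < Kd α t j j := Kd_pos hα0 hα1 hmono hj le_rfl (by omega)
  refine ⟨hnn j (Finset.mem_Icc.mpr ⟨le_rfl, hjn⟩), ?_⟩
  have hsingle : Pd α t n j * Kd α t j j ≤ ∑ l ∈ Finset.Icc j n, Pd α t n l * Kd α t l j := by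
    refine Finset.single_le_sum (f := fun l => Pd α t n l * Kd α t l j) ?_
      (Finset.mem_Icc.mpr ⟨le_rfl, hjn⟩)
    intro l hl
    have hl' := Finset.mem_Icc.mp hl
    exact mul_nonneg (hnn l hl) (Kd_pos hα0 hα1 hmono hj hl'.1 (by omega)).le
  rw [hsum] at hsingle
  have := (le_div_iff₀ hKjj).mpr hsingle
  rwa [one_div_Kd_diag hα0 hα1 hmono hj (by omega)] at this
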